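/- Suppose V = ⟨u_1⟩ ⊕ ⟨u_2⟩ with e(u_1) < e(u_2). Then for every x ∈ V there exist a K-linear automorphism α of V commuting with f and nonnegative integers k_1, k_2 such that α(x) = f^{k_1}(u_1) + f^{k_2}(u_2). -/

import Mathlib

open Module LinearMap

section Defs

variable {K V : Type*} [Field K] [AddCommGroup V] [Module K V]

/-- `α` commutes with `f`. -/
def Commutes (f : V →ₗ[K] V) (α : V ≃ₗ[K] V) : Prop :=
  ∀ v, α (f v) = f (α v)

/-- `X` is hyperinvariant: invariant under every endomorphism commuting with `f`. -/
def Hyperinv (f : V →ₗ[K] V) (X : Submodule K V) : Prop :=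
  ∀ g : V →ₗ[K] V, (∀ v, g (f v) = f (g v)) → ∀ x ∈ X, g x ∈ X

/-- `X` is characteristic: `f`-invariant and invariant under every automorphism
commuting with `f`. -/
def Charinv (f : V →ₗ[K] V) (X : Submodule K V) : Prop :=
  (∀ x ∈ X, f x ∈ X) ∧ ∀ α : V ≃ₗ[K] V, Commutes f α → ∀ x ∈ X, α x ∈ X

/-- The characteristic hull of a set `B`: the subspace spanned by all
`f^i (α b)`, `b ∈ B`, `α` an automorphism commuting with `f`. -/
def charHull (f : V →ₗ[K] V) (B : Set V) : Submodule K V :=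
  Submodule.span K
    {y | ∃ b ∈ B, ∃ i : ℕ, ∃ α : V ≃ₗ[K] V, Commutes f α ∧ y = (f ^ i) (α b)}

/-- The `f`-cyclic subspace generated by `x`. -/
def cyc (f : V →ₗ[K] V) (x : V) : Submodule K V :=
  Submodule.span K (Set.range fun i : ℕ => (f ^ i) x)

/-- The `f`-invariant span of a set `B`. -/
def invSpan (f : V →ₗ[K] V) (B : Set V) : Submodule K V :=
  Submodule.span K {y | ∃ b ∈ B, ∃ i : ℕ, y = (f ^ i) b}

/-- The exponent of `x`: the least `ℓ` with `f^ℓ x = 0`. -/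
noncomputable def expnt (f : V →ₗ[K] V) (x : V) : ℕ :=
  sInf {ℓ : ℕ | (f ^ ℓ) x = 0}

/-- The height of `x`: the largest `q` with `x ∈ f^q V`. -/
noncomputable def hgt (f : V →ₗ[K] V) (x : V) : ℕ :=
  sSup {q : ℕ | x ∈ LinearMap.range (f ^ q)}

/-- `u` is a generator of `V`: `V = ⟨u⟩ ⊕ V₂` for some `f`-invariant `V₂`. -/
def IsGenerator (f : V →ₗ[K] V) (u : V) : Prop :=
  u ≠ 0 ∧ ∃ V₂ : Submodule K V, (∀ x ∈ V₂, f x ∈ V₂) ∧ IsCompl (cyc f u) V₂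

/-- `(u 0, …, u (m-1))` is a generator tuple of `V`:
`V = ⟨u 0⟩ ⊕ ⋯ ⊕ ⟨u (m-1)⟩` with nondecreasing exponents. -/
def IsGenTuple {m : ℕ} (f : V →ₗ[K] V) (u : Fin m → V) : Prop :=
  DirectSum.IsInternal (fun i => cyc f (u i)) ∧ Monotone fun i => expnt f (u i)

/-- The Ulm invariant `d(f,r) = dim ((ker f ⊓ f^{r-1} V) / (ker f ⊓ f^r V))`. -/
noncomputable def ulm (f : V →ₗ[K] V) (r : ℕ) : ℕ :=
  Module.finrank K
    (↥(LinearMap.ker f ⊓ LinearMap.range (f ^ (r - 1))) ⧸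
      Submodule.comap (LinearMap.ker f ⊓ LinearMap.range (f ^ (r - 1))).subtype
        (LinearMap.ker f ⊓ LinearMap.range (f ^ r)))

/-- The largest hyperinvariant subspace contained in `X`
(the sum of all hyperinvariant subspaces contained in `X`). -/
noncomputable def largestHyperinv (f : V →ₗ[K] V) (X : Submodule K V) : Submodule K V :=
  sSup {W : Submodule K V | Hyperinv f W ∧ W ≤ X}

end Defs

section Aux

variable {K V : Type*} [Field K] [AddCommGroup V] [Module K V]

open Polynomial

lemma commute_aeval_aux (f T : Module.End K V) (h : Commute T f) (g : K[X]) :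
    Commute T (Polynomial.aeval f g) := by
  induction g using Polynomial.induction_on' with
  | add p q hp hq => rw [map_add]; exact hp.add_right hq
  | monomial i c =>
    rw [Polynomial.aeval_monomial]
    exact (show Commute T ((algebraMap K (Module.End K V)) c) from
      (Algebra.commutes c T).symm).mul_right (h.pow_right i)

lemma cyc_finv (f : Module.End K V) (u : V) : ∀ v ∈ cyc f u, f v ∈ cyc f u := by
  intro v hv
  induction hv using Submodule.span_induction with
  | mem y hy =>
    obtain ⟨i, rfl⟩ := hy
    exact Submodule.subset_span ⟨i + 1, by show (f ^ (i + 1)) u = _; rw [pow_succ']; rfl⟩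
  | zero => simp
  | add y z _ _ hy hz => rw [map_add]; exact Submodule.add_mem _ hy hz
  | smul c y _ hy => rw [map_smul]; exact Submodule.smul_mem _ c hy

lemma mem_cyc_exists (f : Module.End K V) (u : V) {v : V} (hv : v ∈ cyc f u) :
    ∃ p : K[X], v = Polynomial.aeval f p u := by
  induction hv using Submodule.span_induction with
  | mem y hy =>
    obtain ⟨i, rfl⟩ := hy
    exact ⟨X ^ i, by rw [Polynomial.aeval_X_pow]⟩
  | zero => exact ⟨0, by simp⟩
  | add y z _ _ hy hz =>
    obtain ⟨p, rfl⟩ := hy; obtain ⟨q, rfl⟩ := hz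
    exact ⟨p + q, by rw [map_add]; rfl⟩
  | smul c y _ hy =>
    obtain ⟨p, rfl⟩ := hy
    exact ⟨c • p, by rw [map_smul]; rfl⟩

lemma factor_aux (f : Module.End K V) {n : ℕ} (hn : f ^ n = 0) (p : K[X]) (u : V) :
    ∃ (a : ℕ) (g : K[X]), IsUnit (Polynomial.aeval f g) ∧
      Polynomial.aeval f p u = Polynomial.aeval f g ((f ^ a) u) := by
  by_cases hp : p = 0
  · refine ⟨n, 1, by simp, ?_⟩
    rw [hp, hn]; simp
  · obtain ⟨g, hg⟩ : (X : K[X]) ^ p.natTrailingDegree ∣ p :=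
      X_pow_dvd_iff.mpr fun d hd => coeff_eq_zero_of_lt_natTrailingDegree hd
    have hg0 : g.coeff 0 ≠ 0 := by
      have h1 := coeff_X_pow_mul g p.natTrailingDegree 0
      rw [← hg, zero_add] at h1
      rw [← h1]
      exact trailingCoeff_nonzero_iff_nonzero.mpr hp
    refine ⟨p.natTrailingDegree, g, ?_, ?_⟩
    · have hgsplit : Polynomial.aeval f g =
          algebraMap K (Module.End K V) (g.coeff 0) + f * Polynomial.aeval f g.divX := by
        conv_lhs => rw [← X_mul_divX_add g]
        rw [map_add, map_mul, Polynomial.aeval_X, Polynomial.aeval_C, add_comm]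
      rw [hgsplit]
      refine IsNilpotent.isUnit_add_left_of_commute ?_ ?_ ?_
      · exact (commute_aeval_aux f f (Commute.refl f) g.divX).isNilpotent_mul_right ⟨n, hn⟩
      · exact (isUnit_iff_ne_zero.mpr hg0).map (algebraMap K (Module.End K V))
      · exact (Algebra.commutes (g.coeff 0) (f * Polynomial.aeval f g.divX)).symm
    · conv_lhs => rw [hg, mul_comm]
      rw [map_mul, Polynomial.aeval_X_pow, Module.End.mul_apply]

end Aux

theorem stmt9 {K V : Type*} [Field K] [AddCommGroup V] [Module K V]
    [FiniteDimensional K V] (f : V →ₗ[K] V) (hf : IsNilpotent f)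
    (u₁ u₂ : V) (hcompl : IsCompl (cyc f u₁) (cyc f u₂))
    (he : expnt f u₁ < expnt f u₂) (x : V) :
    ∃ α : V ≃ₗ[K] V, Commutes f α ∧
      ∃ k₁ k₂ : ℕ, α x = (f ^ k₁) u₁ + (f ^ k₂) u₂ := by
  obtain ⟨n, hn⟩ := hf
  have hx : x ∈ cyc f u₁ ⊔ cyc f u₂ := by rw [hcompl.sup_eq_top]; trivial
  obtain ⟨x₁, hx₁, x₂, hx₂, rfl⟩ := Submodule.mem_sup.mp hx
  obtain ⟨p, hp⟩ := mem_cyc_exists f u₁ hx₁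
  obtain ⟨q, hq⟩ := mem_cyc_exists f u₂ hx₂
  obtain ⟨a, g, hgu, hga⟩ := factor_aux f hn p u₁
  obtain ⟨b, h', hhu, hhb⟩ := factor_aux f hn q u₂
  set A : Module.End K V := Polynomial.aeval f g with hA
  set B : Module.End K V := Polynomial.aeval f h' with hB
  set π : Module.End K V :=
    (cyc f u₁).subtype ∘ₗ Submodule.linearProjOfIsCompl _ _ hcompl with hπdef
  set ρ : Module.End K V :=
    (cyc f u₂).subtype ∘ₗ Submodule.linearProjOfIsCompl _ _ hcompl.symm with hρdef
  have hπmem : ∀ v, π v ∈ cyc f u₁ := fun v => Submodule.coe_mem _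
  have hρmem : ∀ v, ρ v ∈ cyc f u₂ := fun v => Submodule.coe_mem _
  have hπ1 : ∀ v ∈ cyc f u₁, π v = v := fun v hv => by
    have := Submodule.linearProjOfIsCompl_apply_left hcompl ⟨v, hv⟩
    exact congrArg (Subtype.val) this
  have hπ2 : ∀ v ∈ cyc f u₂, π v = 0 := fun v hv => by
    have := Submodule.projectionOnto_apply_of_mem_right hcompl hv
    exact (congrArg (Subtype.val) this).trans (Submodule.coe_zero)
  have hρ1 : ∀ v ∈ cyc f u₂, ρ v = v := fun v hv => by
    have := Submodule.linearProjOfIsCompl_apply_left hcompl.symm ⟨v, hv⟩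
    exact congrArg (Subtype.val) this
  have hρ2 : ∀ v ∈ cyc f u₁, ρ v = 0 := fun v hv => by
    have := Submodule.projectionOnto_apply_of_mem_right hcompl.symm hv
    exact (congrArg (Subtype.val) this).trans (Submodule.coe_zero)
  have hsum : π + ρ = 1 := by
    ext v
    exact Submodule.projection_add_projection_eq_self hcompl v
  have hπf : Commute π f := by
    apply LinearMap.ext
    intro v
    have hv : π v + ρ v = v := by
      have := congrArg (fun T : Module.End K V => T v) hsum
      simpa using this
    show π (f v) = f (π v)
    conv_lhs => rw [← hv]
    rw [map_add, map_add, hπ1 _ (cyc_finv f u₁ _ (hπmem v)),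
      hπ2 _ (cyc_finv f u₂ _ (hρmem v)), add_zero]
  have hρf : Commute ρ f := by
    apply LinearMap.ext
    intro v
    have hv : π v + ρ v = v := by
      have := congrArg (fun T : Module.End K V => T v) hsum
      simpa using this
    show ρ (f v) = f (ρ v)
    conv_lhs => rw [← hv]
    rw [map_add, map_add, hρ2 _ (cyc_finv f u₁ _ (hπmem v)),
      hρ1 _ (cyc_finv f u₂ _ (hρmem v)), zero_add]
  have hππ : π * π = π := LinearMap.ext fun v => hπ1 _ (hπmem v)
  have hπρ : π * ρ = 0 := LinearMap.ext fun v => hπ2 _ (hρmem v)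
  have hρπ : ρ * π = 0 := LinearMap.ext fun v => hρ2 _ (hπmem v)
  have hρρ : ρ * ρ = ρ := LinearMap.ext fun v => hρ1 _ (hρmem v)
  have hπA : Commute π A := commute_aeval_aux f π hπf g
  have hπB : Commute π B := commute_aeval_aux f π hπf h'
  have hρA : Commute ρ A := commute_aeval_aux f ρ hρf g
  have hρB : Commute ρ B := commute_aeval_aux f ρ hρf h'
  set A' : Module.End K V := ↑hgu.unit⁻¹ with hA'def
  set B' : Module.End K V := ↑hhu.unit⁻¹ with hB'def
  have hπA' : Commute π A' :=
    Commute.units_inv_right (by rw [IsUnit.unit_spec]; exact hπA)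
  have hπB' : Commute π B' :=
    Commute.units_inv_right (by rw [IsUnit.unit_spec]; exact hπB)
  have hρA' : Commute ρ A' :=
    Commute.units_inv_right (by rw [IsUnit.unit_spec]; exact hρA)
  have hρB' : Commute ρ B' :=
    Commute.units_inv_right (by rw [IsUnit.unit_spec]; exact hρB)
  have hA'A : A' * A = 1 := hgu.val_inv_mul
  have hAA' : A * A' = 1 := hgu.mul_val_inv
  have hB'B : B' * B = 1 := hhu.val_inv_mul
  have hBB' : B * B' = 1 := hhu.mul_val_inv
  have key2 : ∀ P Q σ τ : Module.End K V, σ * P = P * σ →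
      (Q * σ) * (P * τ) = (Q * P) * (σ * τ) := by
    intro P Q σ τ h
    rw [mul_assoc, ← mul_assoc σ, h, mul_assoc, ← mul_assoc]
  set G : Module.End K V := A' * π + B' * ρ with hGdef
  set Ginv : Module.End K V := A * π + B * ρ with hGinvdef
  have hmul1 : G * Ginv = 1 := by
    calc G * Ginv
        = (A' * π) * (A * π) + (A' * π) * (B * ρ)
          + ((B' * ρ) * (A * π) + (B' * ρ) * (B * ρ)) := by
          rw [hGdef, hGinvdef, add_mul, mul_add, mul_add, add_assoc]
      _ = (A' * A) * (π * π) + (A' * B) * (π * ρ)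
          + ((B' * A) * (ρ * π) + (B' * B) * (ρ * ρ)) := by
          rw [key2 A A' π π hπA, key2 B A' π ρ hπB, key2 A B' ρ π hρA, key2 B B' ρ ρ hρB]
      _ = 1 := by
          rw [hππ, hπρ, hρπ, hρρ, mul_zero, mul_zero, hA'A, hB'B, one_mul, one_mul,
            add_zero, zero_add, hsum]
  have hmul2 : Ginv * G = 1 := by
    calc Ginv * G
        = (A * π) * (A' * π) + (A * π) * (B' * ρ)
          + ((B * ρ) * (A' * π) + (B * ρ) * (B' * ρ)) := by
          rw [hGdef, hGinvdef, add_mul, mul_add, mul_add, add_assoc]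
      _ = (A * A') * (π * π) + (A * B') * (π * ρ)
          + ((B * A') * (ρ * π) + (B * B') * (ρ * ρ)) := by
          rw [key2 A' A π π hπA', key2 B' A π ρ hπB', key2 A' B ρ π hρA', key2 B' B ρ ρ hρB']
      _ = 1 := by
          rw [hππ, hπρ, hρπ, hρρ, mul_zero, mul_zero, hAA', hBB', one_mul, one_mul,
            add_zero, zero_add, hsum]
  refine ⟨LinearEquiv.ofLinear G Ginv ?_ ?_, ?_, a, b, ?_⟩
  · rw [← Module.End.mul_eq_comp, hmul1]; rfl
  · rw [← Module.End.mul_eq_comp, hmul2]; rfl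
  · -- Commutes
    intro v
    have hfA' : Commute f A' :=
      Commute.units_inv_right (by rw [IsUnit.unit_spec]; exact commute_aeval_aux f f (Commute.refl f) g)
    have hfB' : Commute f B' :=
      Commute.units_inv_right (by rw [IsUnit.unit_spec]; exact commute_aeval_aux f f (Commute.refl f) h')
    have hfG : Commute f G := (hfA'.mul_right hπf.symm).add_right (hfB'.mul_right hρf.symm)
    have := congrArg (fun T : Module.End K V => T v) hfG.symm.eq
    simpa [Module.End.mul_apply] using this
  · show G (x₁ + x₂) = (f ^ a) u₁ + (f ^ b) u₂
    have hx1 : x₁ = A ((f ^ a) u₁) := hp.trans hga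
    have hx2 : x₂ = B ((f ^ b) u₂) := hq.trans hhb
    have hG1 : G x₁ = (f ^ a) u₁ := by
      show (A' * π + B' * ρ) x₁ = _
      rw [LinearMap.add_apply, Module.End.mul_apply, Module.End.mul_apply,
        hπ1 _ hx₁, hρ2 _ hx₁, map_zero, add_zero, hx1,
        ← Module.End.mul_apply, hA'A, Module.End.one_apply]
    have hG2 : G x₂ = (f ^ b) u₂ := by
      show (A' * π + B' * ρ) x₂ = _
      rw [LinearMap.add_apply, Module.End.mul_apply, Module.End.mul_apply,
        hπ2 _ hx₂, hρ1 _ hx₂, map_zero, zero_add, hx2,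
        ← Module.End.mul_apply, hB'B, Module.End.one_apply]
    rw [map_add, hG1, hG2]
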